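/- Let $g$ be a dyadic distribution on $\mathbb{R}^2$ and suppose there exist an open set $\Omega_0$ of finite measure, a contracting family $\{\Omega_i\}_{i\ge0}$ starting at $\Omega_0$, and $\lambda_i\in\mathbb{Z}\cup\{-\infty\}$ such that $\eta|\Omega_i| \le |\{S_d(g|\Omega_i) > 2^{\lambda_i-1}\}|$ whenever $\lambda_i\in\mathbb{Z}$, and every coefficient rectangle of $g$ is in $\Omega_0$ with $\Omega_{i+1}\supseteq\{$rectangles where $S_d(g|\Omega_i)>2^{\lambda_i}$ concentrates$\}$ as in the standard stopping construction. Then $\sum_{i\ge 0} 2^{r\lambda_i}|\Omega_i| \le C_{\eta,r}\, \|S_d(g)\|_{L^r(\mathbb{R}^2)}^r$ for all $0<r<\infty$. -/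

import Mathlib

open MeasureTheory Set
open scoped ENNReal NNReal

noncomputable section

/-- The dyadic interval `[2^k n, 2^k (n+1))`. -/
def dyadicInterval (k n : ℤ) : Set ℝ := Set.Ico ((2 : ℝ) ^ k * n) ((2 : ℝ) ^ k * (n + 1))

/-- Index for dyadic rectangles: scales and positions in each coordinate. -/
abbrev DyadicRect := (ℤ × ℤ) × ℤ × ℤ

/-- The dyadic rectangle in the plane indexed by `R`. -/
def dyadicRect (R : DyadicRect) : Set (ℝ × ℝ) :=
  (dyadicInterval R.1.1 R.1.2) ×ˢ (dyadicInterval R.2.1 R.2.2)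

/-- The measure `|R|` of a dyadic rectangle, as an extended nonnegative real. -/
def rectVol (R : DyadicRect) : ℝ≥0∞ := (2 : ℝ≥0∞) ^ R.1.1 * (2 : ℝ≥0∞) ^ R.2.1

/-- The bi-parameter dyadic square function of a family of Haar coefficients `c`:
`S_d(c)(x) = (∑_R c_R² χ_R(x)/|R|)^{1/2}`. -/
def Sd (c : DyadicRect → ℝ) (x : ℝ × ℝ) : ℝ≥0∞ :=
  (∑' R : DyadicRect,
      (dyadicRect R).indicator (fun _ => ENNReal.ofReal (c R ^ 2) / rectVol R) x) ^ (1 / 2 : ℝ)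

/-- The average `⟨f⟩_R` of `f` over the dyadic rectangle `R`. -/
def rectAvg (f : ℝ × ℝ → ℝ) (R : DyadicRect) : ℝ :=
  (∫ y in dyadicRect R, f y) / (rectVol R).toReal

/-- The bi-parameter dyadic maximal function `M_d(f)(x) = sup_{R ∋ x} |⟨f⟩_R|`. -/
def Md (f : ℝ × ℝ → ℝ) (x : ℝ × ℝ) : ℝ≥0∞ :=
  ⨆ R : DyadicRect, (dyadicRect R).indicator (fun _ => ENNReal.ofReal |rectAvg f R|) x

end

noncomputable section
open Classical in
/-- The localized bi-parameter dyadic square function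
`S_d(g|Ω) = (∑_{R ⊆ Ω} g_R² χ_R/|R|)^{1/2}`. -/
def SdLoc (c : DyadicRect → ℝ) (Ω : Set (ℝ × ℝ)) (x : ℝ × ℝ) : ℝ≥0∞ :=
  (∑' R : DyadicRect,
      if dyadicRect R ⊆ Ω then
        (dyadicRect R).indicator (fun _ => ENNReal.ofReal (c R ^ 2) / rectVol R) x
      else 0) ^ (1 / 2 : ℝ)

/-- The weight `2^{rλ}` for `λ ∈ ℤ ∪ {-∞}`, with the convention `2^{r·(-∞)} = 0`. -/
def rThresh (r : ℝ) (l : WithBot ℤ) : ℝ≥0∞ :=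
  l.recBotCoe 0 fun k => (2 : ℝ≥0∞) ^ (r * (k : ℝ))

end

section Aux

lemma measurableSet_dyadicRect (R : DyadicRect) : MeasurableSet (dyadicRect R) :=
  measurableSet_Ico.prod measurableSet_Ico

lemma sdLoc_le_sd (c : DyadicRect → ℝ) (Ω : Set (ℝ × ℝ)) (x : ℝ × ℝ) :
    SdLoc c Ω x ≤ Sd c x := by
  refine ENNReal.rpow_le_rpow (ENNReal.tsum_le_tsum fun R => ?_) (by norm_num)
  split_ifs
  · exact le_rfl
  · exact zero_le

lemma sdLoc_eq_zero_of_not_mem (c : DyadicRect → ℝ) (Ω : Set (ℝ × ℝ)) {x : ℝ × ℝ}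
    (hx : x ∉ Ω) : SdLoc c Ω x = 0 := by
  have h0 : SdLoc c Ω x = (0 : ℝ≥0∞) ^ (1 / 2 : ℝ) := by
    unfold SdLoc
    congr 1
    refine ENNReal.tsum_eq_zero.mpr fun R => ?_
    split_ifs with h
    · exact Set.indicator_of_notMem (fun hxR => hx (h hxR)) _
    · rfl
  rw [h0]
  exact ENNReal.zero_rpow_of_pos (by norm_num)

lemma measurable_sdLoc (c : DyadicRect → ℝ) (Ω : Set (ℝ × ℝ)) :
    Measurable (SdLoc c Ω) := by
  apply Measurable.pow_const
  apply Measurable.ennreal_tsum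
  intro R
  split_ifs
  · exact Measurable.indicator measurable_const (measurableSet_dyadicRect R)
  · exact measurable_const

end Aux

/-- Let `g` be a dyadic distribution whose coefficient rectangles lie in an
open set `Ω 0` of finite measure, `{Ω i}` a contracting family, and `λ i ∈ ℤ ∪ {-∞}` with
`η |Ω_i| ≤ |{S_d(g|Ω_i) > 2^{λ_i - 1}}|` whenever `λ_i ∈ ℤ`. Then for every `0 < r < ∞`,
`∑_i 2^{rλ_i} |Ω_i| ≤ C_{η,r} ‖S_d(g)‖_{L^r}^r`. -/
theorem stopping_sum_le_square_function (η r : ℝ) (hη0 : 0 < η) (hη1 : η < 1) (hr : 0 < r) :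
    ∃ C : ℝ≥0,
      ∀ (g : DyadicRect → ℝ) (Ω : ℕ → Set (ℝ × ℝ)) (lam : ℕ → WithBot ℤ),
        IsOpen (Ω 0) → volume (Ω 0) < ⊤ →
        (∀ i, Ω (i + 1) ⊆ Ω i) →
        (∀ i, volume (Ω (i + 1)) ≤ volume (Ω i) / 2) →
        (∀ R, g R ≠ 0 → dyadicRect R ⊆ Ω 0) →
        (∀ i, ∀ k : ℤ, lam i = (k : WithBot ℤ) →
          ENNReal.ofReal η * volume (Ω i)
            ≤ volume {x | (2 : ℝ≥0∞) ^ (k - 1) < SdLoc g (Ω i) x}) →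
        ∑' i, rThresh r (lam i) * volume (Ω i) ≤ C * ∫⁻ x, Sd g x ^ r := by
  set a : ℝ≥0∞ := ENNReal.ofReal η with ha_def
  have ha0 : a ≠ 0 := by simp [ha_def, ENNReal.ofReal_eq_zero]; linarith
  have hat : a ≠ ⊤ := ENNReal.ofReal_ne_top
  have ha2 : a / 2 ≠ 0 := by
    simp [ENNReal.div_eq_zero_iff, ha0]
  obtain ⟨m0, hm0⟩ := ENNReal.exists_inv_two_pow_lt ha2
  set m : ℕ := m0 + 1 with hm_def
  haveI : NeZero m := ⟨Nat.succ_ne_zero _⟩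
  have hm : (2⁻¹ : ℝ≥0∞) ^ m ≤ a / 2 := by
    calc (2⁻¹ : ℝ≥0∞) ^ m = 2⁻¹ ^ m0 * 2⁻¹ := by rw [hm_def, pow_succ]
    _ ≤ 2⁻¹ ^ m0 * 1 := by gcongr; exact ENNReal.inv_le_one.mpr one_le_two
    _ = 2⁻¹ ^ m0 := mul_one _
    _ ≤ a / 2 := hm0.le
  -- the constant
  set K : ℝ≥0∞ := (2 : ℝ≥0∞) ^ r / (a / 2) with hK_def
  have hKt : K ≠ ⊤ := by
    rw [hK_def]
    exact (ENNReal.div_lt_top (ENNReal.rpow_lt_top_of_nonneg hr.le (by norm_num)).ne ha2).ne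
  set D : ℝ≥0∞ := (m : ℝ≥0∞) * K with hD_def
  have hDt : D ≠ ⊤ := ENNReal.mul_ne_top (by simp) hKt
  refine ⟨D.toNNReal, ?_⟩
  intro g Ω lam hopen hfin hsub hhalf hsupp hmain
  rw [ENNReal.coe_toNNReal hDt]
  -- basic structure
  have hanti : Antitone Ω := antitone_nat_of_succ_le hsub
  have hΩfin : ∀ i, volume (Ω i) ≠ ⊤ := fun i =>
    ((measure_mono (hanti (Nat.zero_le i))).trans_lt hfin).ne
  have hiter : ∀ i n : ℕ, volume (Ω (i + n)) ≤ 2⁻¹ ^ n * volume (Ω i) := by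
    intro i n
    induction n with
    | zero => simp
    | succ n ih =>
      calc volume (Ω (i + (n + 1))) ≤ volume (Ω (i + n)) / 2 := hhalf _
      _ ≤ (2⁻¹ ^ n * volume (Ω i)) / 2 := ENNReal.div_le_div_right ih _
      _ = 2⁻¹ ^ (n + 1) * volume (Ω i) := by
          rw [div_eq_mul_inv, pow_succ]; ring
  -- the sets
  set thr : ℕ → ℝ≥0∞ := fun i => (lam i).recBotCoe ⊤ fun k : ℤ => (2 : ℝ≥0∞) ^ (k - 1)
    with hthr_def
  set E : ℕ → Set (ℝ × ℝ) := fun i => {x | thr i < SdLoc g (Ω i) x} with hE_def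
  set T : ℕ → Set (ℝ × ℝ) := fun j => toMeasurable volume (Ω j) with hT_def
  set F : ℕ → Set (ℝ × ℝ) := fun i => E i \ T (i + m) with hF_def
  have hEmeas : ∀ i, MeasurableSet (E i) := fun i =>
    measurableSet_lt measurable_const (measurable_sdLoc g (Ω i))
  have hFmeas : ∀ i, MeasurableSet (F i) := fun i =>
    (hEmeas i).diff (measurableSet_toMeasurable _ _)
  have hEsub : ∀ i, E i ⊆ Ω i := by
    intro i x hx
    by_contra hxo
    rw [hE_def, mem_setOf_eq, sdLoc_eq_zero_of_not_mem g (Ω i) hxo] at hx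
    exact absurd hx (not_lt.mpr zero_le)
  have hFdisj : ∀ i j : ℕ, i + m ≤ j → Disjoint (F i) (F j) := by
    intro i j hij
    have h1 : F j ⊆ T (i + m) :=
      (diff_subset.trans (hEsub j)).trans ((hanti hij).trans (subset_toMeasurable _ _))
    exact (disjoint_sdiff_left (s := T (i + m)) (t := E i)).mono_right h1
  -- the key per-index estimate
  have key : ∀ i, rThresh r (lam i) * volume (Ω i) ≤ K * ∫⁻ x in F i, Sd g x ^ r := by
    intro i
    rcases hl : lam i with _ | k
    · have h0 : rThresh r (none : WithBot ℤ) = 0 := rfl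
      rw [h0, zero_mul]
      exact zero_le
    · -- lam i = k
      have hthr : thr i = (2 : ℝ≥0∞) ^ (k - 1) := by
        simp only [hthr_def]
        rw [hl]
        rfl
      have hE1 : a * volume (Ω i) ≤ volume (E i) := by
        have := hmain i k hl
        rwa [show {x | (2 : ℝ≥0∞) ^ (k - 1) < SdLoc g (Ω i) x} = E i by
          rw [hE_def]; simp only [hthr]] at this
      -- lower bound on F i
      have hT1 : volume (T (i + m)) ≤ a / 2 * volume (Ω i) := by
        rw [hT_def]
        simp only [measure_toMeasurable]
        calc volume (Ω (i + m)) ≤ 2⁻¹ ^ m * volume (Ω i) := hiter i m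
        _ ≤ a / 2 * volume (Ω i) := mul_le_mul_left hm _
      have hfinhalf : a / 2 * volume (Ω i) ≠ ⊤ :=
        ENNReal.mul_ne_top (ENNReal.div_lt_top hat (by norm_num)).ne (hΩfin i)
      have hF1 : a / 2 * volume (Ω i) ≤ volume (F i) := by
        have hEFT : volume (E i) ≤ volume (F i) + volume (T (i + m)) :=
          (measure_mono (subset_diff_union (E i) (T (i + m)))).trans
            (measure_union_le _ _)
        have h2 : a / 2 * volume (Ω i) + a / 2 * volume (Ω i)
            ≤ volume (F i) + a / 2 * volume (Ω i) := by
          calc a / 2 * volume (Ω i) + a / 2 * volume (Ω i)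
              = a * volume (Ω i) := by rw [← add_mul, ENNReal.add_halves]
          _ ≤ volume (E i) := hE1
          _ ≤ volume (F i) + volume (T (i + m)) := hEFT
          _ ≤ volume (F i) + a / 2 * volume (Ω i) := add_le_add_right hT1 _
        exact (ENNReal.add_le_add_iff_right hfinhalf).mp h2
      have hVF : volume (Ω i) ≤ volume (F i) / (a / 2) :=
        (ENNReal.le_div_iff_mul_le (Or.inl ha2)
          (Or.inl (ENNReal.div_lt_top hat (by norm_num)).ne)).mpr
          (by rwa [mul_comm])
      -- pointwise lower bound for Sd on F i
      have hSd : ∀ x ∈ F i, ((2 : ℝ≥0∞) ^ (k - 1)) ^ r ≤ Sd g x ^ r := by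
        intro x hx
        have hx1 : thr i < SdLoc g (Ω i) x := hx.1
        rw [hthr] at hx1
        exact ENNReal.rpow_le_rpow (hx1.le.trans (sdLoc_le_sd g (Ω i) x)) hr.le
      have hint : ((2 : ℝ≥0∞) ^ (k - 1)) ^ r * volume (F i)
          ≤ ∫⁻ x in F i, Sd g x ^ r := by
        rw [← setLIntegral_const (F i) (((2 : ℝ≥0∞) ^ (k - 1)) ^ r)]
        exact setLIntegral_mono' (hFmeas i) hSd
      -- exponent arithmetic
      have hexp : (2 : ℝ≥0∞) ^ (r * (k : ℝ))
          = (2 : ℝ≥0∞) ^ r * ((2 : ℝ≥0∞) ^ (k - 1)) ^ r := by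
        rw [show ((2 : ℝ≥0∞) ^ (k - 1)) = (2 : ℝ≥0∞) ^ (((k - 1 : ℤ) : ℝ)) from
          (ENNReal.rpow_intCast 2 (k - 1)).symm,
          ← ENNReal.rpow_mul, ← ENNReal.rpow_add _ _ (by norm_num) (by norm_num)]
        congr 1
        push_cast
        ring
      have hrt : rThresh r ((k : WithBot ℤ)) = (2 : ℝ≥0∞) ^ (r * (k : ℝ)) := rfl
      calc rThresh r ((k : WithBot ℤ)) * volume (Ω i)
          = (2 : ℝ≥0∞) ^ (r * (k : ℝ)) * volume (Ω i) := by rw [hrt]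
      _ ≤ (2 : ℝ≥0∞) ^ (r * (k : ℝ)) * (volume (F i) / (a / 2)) :=
          mul_le_mul_right hVF _
      _ = ((2 : ℝ≥0∞) ^ r * (((2 : ℝ≥0∞) ^ (k - 1)) ^ r * volume (F i))) / (a / 2) := by
          rw [hexp]; simp only [div_eq_mul_inv]; ring
      _ ≤ ((2 : ℝ≥0∞) ^ r * ∫⁻ x in F i, Sd g x ^ r) / (a / 2) := by
          exact ENNReal.div_le_div_right (mul_le_mul_right hint _) _
      _ = K * ∫⁻ x in F i, Sd g x ^ r := by
          rw [hK_def]; simp only [div_eq_mul_inv]; ring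
  -- sum up
  have hsum : ∑' i, ∫⁻ x in F i, Sd g x ^ r ≤ (m : ℝ≥0∞) * ∫⁻ x, Sd g x ^ r := by
    set A : ℕ → ℝ≥0∞ := fun i => ∫⁻ x in F i, Sd g x ^ r with hA_def
    have h1 : ∑' i, A i = ∑' p : ℕ × Fin m, A ((Nat.divModEquiv m).symm p) :=
      (Equiv.tsum_eq (Nat.divModEquiv m).symm A).symm
    rw [h1, ENNReal.tsum_prod', ENNReal.tsum_comm]
    have h2 : ∀ c : Fin m, ∑' j : ℕ, A ((Nat.divModEquiv m).symm (j, c))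
        ≤ ∫⁻ x, Sd g x ^ r := by
      intro c
      have heq : ∀ j : ℕ, (Nat.divModEquiv m).symm (j, c) = j * m + (c : ℕ) := fun j => rfl
      simp only [heq]
      have hdisj : Pairwise (Function.onFun Disjoint fun j : ℕ => F (j * m + (c : ℕ))) := by
        intro j j' hne
        rcases hne.lt_or_gt with h | h
        · refine hFdisj _ _ ?_
          have h1 : (j + 1) * m ≤ j' * m := Nat.mul_le_mul_right m h
          calc j * m + (c : ℕ) + m = (j + 1) * m + (c : ℕ) := by ring
          _ ≤ j' * m + (c : ℕ) := Nat.add_le_add_right h1 _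
        · refine (hFdisj _ _ ?_).symm
          have h1 : (j' + 1) * m ≤ j * m := Nat.mul_le_mul_right m h
          calc j' * m + (c : ℕ) + m = (j' + 1) * m + (c : ℕ) := by ring
          _ ≤ j * m + (c : ℕ) := Nat.add_le_add_right h1 _
      calc ∑' j : ℕ, A (j * m + (c : ℕ))
          = ∫⁻ x in ⋃ j : ℕ, F (j * m + (c : ℕ)), Sd g x ^ r :=
          (lintegral_iUnion (fun j => hFmeas _) hdisj _).symm
      _ ≤ ∫⁻ x, Sd g x ^ r := setLIntegral_le_lintegral _ _
    calc ∑' (c : Fin m), ∑' (j : ℕ), A ((Nat.divModEquiv m).symm (j, c))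
        ≤ ∑' (_ : Fin m), ∫⁻ x, Sd g x ^ r := ENNReal.tsum_le_tsum h2
    _ = (m : ℝ≥0∞) * ∫⁻ x, Sd g x ^ r := by
        rw [tsum_fintype]
        simp [Finset.sum_const, nsmul_eq_mul]
  calc ∑' i, rThresh r (lam i) * volume (Ω i)
      ≤ ∑' i, K * ∫⁻ x in F i, Sd g x ^ r := ENNReal.tsum_le_tsum key
  _ = K * ∑' i, ∫⁻ x in F i, Sd g x ^ r := ENNReal.tsum_mul_left
  _ ≤ K * ((m : ℝ≥0∞) * ∫⁻ x, Sd g x ^ r) := mul_le_mul_right hsum _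
  _ = D * ∫⁻ x, Sd g x ^ r := by rw [hD_def]; ring
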